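/- For all parameters A, B, C ∈ ℂ with C ≠ 0 and (C;q)_n ≠ 0 for all n, and all x, y ∈ ℂ with |x| < 1 and |y| < 1, the bibasic Humbert function satisfies (1−A)·Φ₁(qA,B;qC;q,q₁;x,y) = (1−A/C)·Φ₁(A,B;qC;q,q₁;x,y) + (A/C)(1−C)·Φ₁(A,B;C;q,q₁;x,y). (Equation (2.8), with A = q^a, C = q^c, so q^{a−c} = A/C.) -/

import Mathlib

open Complex

/-- The q-shifted factorial (z;q)_n = prod_{r=0}^{n-1} (1 - z q^r). -/
noncomputable def qPoch (q z : ℂ) (n : ℕ) : ℂ :=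
  ∏ r ∈ Finset.range n, (1 - z * q ^ r)

/-- The bibasic Humbert hypergeometric function Φ₁ on two independent bases q and q₁. -/
noncomputable def Phi1 (q q1 A B C x y : ℂ) : ℂ :=
  ∑' p : ℕ × ℕ,
    qPoch q A (p.1 + p.2) * qPoch q1 B p.1 /
      (qPoch q C (p.1 + p.2) * qPoch q1 q1 p.1 * qPoch q q p.2) * x ^ p.1 * y ^ p.2

/-- The Jackson p-derivative. -/
noncomputable def jackson (p : ℂ) (f : ℂ → ℂ) (x : ℂ) : ℂ :=
  (f x - f (p * x)) / ((1 - p) * x)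

noncomputable def Complex.abs : AbsoluteValue ℂ ℝ :=
  IsAbsoluteValue.toAbsoluteValue (norm : ℂ → ℝ)

lemma Complex.norm_eq_abs (z : ℂ) : ‖z‖ = Complex.abs z := rfl

lemma qPoch_succ (q z : ℂ) (n : ℕ) :
    qPoch q z (n + 1) = qPoch q z n * (1 - z * q ^ n) :=
  Finset.prod_range_succ _ _

lemma qPoch_shift (q z : ℂ) (n : ℕ) :
    qPoch q z (n + 1) = (1 - z) * qPoch q (q * z) n := by
  rw [qPoch, Finset.prod_range_succ']
  simp only [pow_zero, mul_one]
  rw [mul_comm]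
  congr 1
  unfold qPoch
  apply Finset.prod_congr rfl
  intro r _
  ring

lemma qPoch_one_sub_sum_le (s : Finset ℕ) (a : ℕ → ℝ)
    (h0 : ∀ i, 0 ≤ a i) (h1 : ∀ i ∈ s, a i ≤ 1) :
    1 - ∑ i ∈ s, a i ≤ ∏ i ∈ s, (1 - a i) := by
  classical
  induction s using Finset.cons_induction with
  | empty => simp
  | cons i s hi ih =>
    rw [Finset.prod_cons, Finset.sum_cons]
    have h1' : ∀ j ∈ s, a j ≤ 1 := fun j hj => h1 j (Finset.mem_cons_of_mem hj)
    have ih' := ih h1'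
    have hp : (0:ℝ) ≤ ∏ j ∈ s, (1 - a j) :=
      Finset.prod_nonneg fun j hj => by linarith [h1' j hj]
    have hi1 : a i ≤ 1 := h1 i (Finset.mem_cons_self _ _)
    have hs : (0:ℝ) ≤ ∑ j ∈ s, a j := Finset.sum_nonneg fun j _ => h0 j
    nlinarith [h0 i, mul_le_mul_of_nonneg_left ih' (by linarith : (0:ℝ) ≤ 1 - a i)]

lemma qPoch_abs_le (q z : ℂ) (hq : Complex.abs q < 1) (n : ℕ) :
    Complex.abs (qPoch q z n) ≤ Real.exp (Complex.abs z * (1 - Complex.abs q)⁻¹) := by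
  rw [qPoch, map_prod]
  calc ∏ r ∈ Finset.range n, Complex.abs (1 - z * q ^ r)
      ≤ ∏ r ∈ Finset.range n, Real.exp (Complex.abs z * Complex.abs q ^ r) := by
        apply Finset.prod_le_prod (fun r _ => AbsoluteValue.nonneg _ _)
        intro r _
        have h1 : Complex.abs (1 - z * q ^ r) ≤ 1 + Complex.abs z * Complex.abs q ^ r := by
          have := norm_sub_le (1:ℂ) (z * q ^ r)
          simpa [Complex.norm_eq_abs, map_mul, map_pow] using this
        have h2 : 1 + Complex.abs z * Complex.abs q ^ r
            ≤ Real.exp (Complex.abs z * Complex.abs q ^ r) := by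
          have := Real.add_one_le_exp (Complex.abs z * Complex.abs q ^ r)
          linarith
        linarith
    _ = Real.exp (∑ r ∈ Finset.range n, Complex.abs z * Complex.abs q ^ r) :=
        (Real.exp_sum _ _).symm
    _ ≤ Real.exp (Complex.abs z * (1 - Complex.abs q)⁻¹) := by
        apply Real.exp_le_exp.2
        rw [← Finset.mul_sum]
        apply mul_le_mul_of_nonneg_left _ (AbsoluteValue.nonneg _ _)
        calc ∑ r ∈ Finset.range n, Complex.abs q ^ r
            ≤ ∑' r : ℕ, Complex.abs q ^ r :=
              Summable.sum_le_tsum _ (fun r _ => by positivity)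
                (summable_geometric_of_lt_one (AbsoluteValue.nonneg _ _) hq)
          _ = (1 - Complex.abs q)⁻¹ :=
              tsum_geometric_of_lt_one (AbsoluteValue.nonneg _ _) hq

lemma qPoch_abs_lower (q C : ℂ) (hq : Complex.abs q < 1)
    (hC : ∀ n, qPoch q C n ≠ 0) :
    ∃ m : ℝ, 0 < m ∧ ∀ n, m ≤ Complex.abs (qPoch q C n) := by
  set a : ℕ → ℝ := fun r => Complex.abs C * Complex.abs q ^ r with ha
  have ha0 : ∀ r, 0 ≤ a r := fun r => by positivity
  have hqa : 0 ≤ Complex.abs q := AbsoluteValue.nonneg _ _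
  -- choose N with tail sum ≤ 1/2
  set K : ℝ := Complex.abs C * (1 - Complex.abs q)⁻¹ with hK
  have hK0 : 0 ≤ K := by
    have h1q : (0:ℝ) ≤ (1 - Complex.abs q)⁻¹ := by
      apply inv_nonneg.2; linarith
    exact mul_nonneg (AbsoluteValue.nonneg _ _) h1q
  obtain ⟨N, hN⟩ := exists_pow_lt_of_lt_one (show (0:ℝ) < 1/(2*(K+1)) by positivity) hq
  have htail : ∀ n, N ≤ n → ∑ r ∈ Finset.Ico N n, a r ≤ 1/2 := by
    intro n hn
    have h1 : ∑ r ∈ Finset.Ico N n, a r = ∑ i ∈ Finset.range (n - N), a (N + i) := by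
      rw [Finset.sum_Ico_eq_sum_range]
    have h2 : ∑ i ∈ Finset.range (n - N), a (N + i)
        = Complex.abs C * Complex.abs q ^ N * ∑ i ∈ Finset.range (n - N), Complex.abs q ^ i := by
      rw [Finset.mul_sum]
      apply Finset.sum_congr rfl
      intro i _
      simp [ha, pow_add]
      ring
    have h3 : ∑ i ∈ Finset.range (n - N), Complex.abs q ^ i ≤ (1 - Complex.abs q)⁻¹ := by
      calc ∑ i ∈ Finset.range (n - N), Complex.abs q ^ i
          ≤ ∑' i : ℕ, Complex.abs q ^ i :=
            Summable.sum_le_tsum _ (fun r _ => by positivity) (summable_geometric_of_lt_one hqa hq)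
        _ = (1 - Complex.abs q)⁻¹ := tsum_geometric_of_lt_one hqa hq
    have h4 : Complex.abs C * Complex.abs q ^ N * ∑ i ∈ Finset.range (n - N), Complex.abs q ^ i
        ≤ K * Complex.abs q ^ N := by
      rw [hK]
      have : Complex.abs C * Complex.abs q ^ N * ∑ i ∈ Finset.range (n - N), Complex.abs q ^ i
          ≤ Complex.abs C * Complex.abs q ^ N * (1 - Complex.abs q)⁻¹ := by
        apply mul_le_mul_of_nonneg_left h3 (by positivity)
      linarith [this]
    have h5 : K * Complex.abs q ^ N ≤ 1/2 := by
      have hpow : Complex.abs q ^ N < 1/(2*(K+1)) := hN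
      have hpow0 : (0:ℝ) ≤ Complex.abs q ^ N := by positivity
      have : K * Complex.abs q ^ N ≤ (K+1) * (1/(2*(K+1))) := by
        apply mul_le_mul (by linarith) hpow.le hpow0 (by linarith)
      have heq : (K+1) * (1/(2*(K+1))) = 1/2 := by
        field_simp
      linarith [this, heq ▸ this]
    linarith [h1 ▸ h2 ▸ h4]
  -- lower bound for n ≥ N
  have hlow : ∀ n, N ≤ n →
      Complex.abs (qPoch q C N) / 2 ≤ Complex.abs (qPoch q C n) := by
    intro n hn
    have hsplit : qPoch q C N * ∏ r ∈ Finset.Ico N n, (1 - C * q ^ r) = qPoch q C n :=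
      Finset.prod_range_mul_prod_Ico _ hn
    have hbound : 1/2 ≤ Complex.abs (∏ r ∈ Finset.Ico N n, (1 - C * q ^ r)) := by
      rw [map_prod]
      have hle1 : ∀ r ∈ Finset.Ico N n, a r ≤ 1 := by
        intro r hr
        have := Finset.single_le_sum (f := a) (fun i _ => ha0 i) hr
        linarith [htail n hn]
      calc (1:ℝ)/2 ≤ 1 - ∑ r ∈ Finset.Ico N n, a r := by linarith [htail n hn]
        _ ≤ ∏ r ∈ Finset.Ico N n, (1 - a r) := qPoch_one_sub_sum_le _ _ ha0 hle1
        _ ≤ ∏ r ∈ Finset.Ico N n, Complex.abs (1 - C * q ^ r) := by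
            apply Finset.prod_le_prod
            · intro r hr; linarith [hle1 r hr]
            · intro r hr
              have h := norm_sub_norm_le (1:ℂ) (C * q ^ r)
              simpa [Complex.norm_eq_abs, map_mul, map_pow, ha] using h
    calc Complex.abs (qPoch q C N) / 2
        = Complex.abs (qPoch q C N) * (1/2) := by ring
      _ ≤ Complex.abs (qPoch q C N) * Complex.abs (∏ r ∈ Finset.Ico N n, (1 - C * q ^ r)) :=
          mul_le_mul_of_nonneg_left hbound (AbsoluteValue.nonneg _ _)
      _ = Complex.abs (qPoch q C n) := by rw [← map_mul, hsplit]
  -- combine with finitely many small n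
  have hne : (Finset.range (N+1)).Nonempty := ⟨0, by simp⟩
  set m0 : ℝ := (Finset.range (N+1)).inf' hne (fun k => Complex.abs (qPoch q C k)) with hm0
  have hm0pos : 0 < m0 := by
    rw [hm0, Finset.lt_inf'_iff]
    intro k _
    exact AbsoluteValue.pos _ (hC k)
  refine ⟨m0/2, by linarith, fun n => ?_⟩
  rcases le_or_gt n N with h | h
  · have : m0 ≤ Complex.abs (qPoch q C n) :=
      Finset.inf'_le _ (by simp [Finset.mem_range]; omega)
    linarith
  · have hNn : N ≤ n := h.le
    have h1 := hlow n hNn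
    have h2 : m0 ≤ Complex.abs (qPoch q C N) :=
      Finset.inf'_le _ (by simp)
    linarith

lemma qPoch_self_ne_zero (q : ℂ) (hq : Complex.abs q < 1) (n : ℕ) :
    qPoch q q n ≠ 0 := by
  rw [qPoch]
  apply Finset.prod_ne_zero_iff.2
  intro r _
  rw [sub_ne_zero]
  intro h
  have : Complex.abs (q * q ^ r) < 1 := by
    rw [map_mul, map_pow]
    calc Complex.abs q * Complex.abs q ^ r ≤ Complex.abs q * 1 := by
          apply mul_le_mul_of_nonneg_left (pow_le_one₀ (AbsoluteValue.nonneg _ _) hq.le)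
            (AbsoluteValue.nonneg _ _)
      _ < 1 := by simpa using hq
  rw [← h] at this
  simp at this

lemma phi1_summable (q q1 A B C x y : ℂ)
    (hq : Complex.abs q < 1) (hq1 : Complex.abs q1 < 1)
    (hC : ∀ n, qPoch q C n ≠ 0)
    (hx : Complex.abs x < 1) (hy : Complex.abs y < 1) :
    Summable (fun p : ℕ × ℕ =>
      qPoch q A (p.1 + p.2) * qPoch q1 B p.1 /
        (qPoch q C (p.1 + p.2) * qPoch q1 q1 p.1 * qPoch q q p.2) * x ^ p.1 * y ^ p.2) := by
  obtain ⟨mC, hmC, hmCle⟩ := qPoch_abs_lower q C hq hC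
  obtain ⟨m1, hm1, hm1le⟩ := qPoch_abs_lower q1 q1 hq1 (qPoch_self_ne_zero q1 hq1)
  obtain ⟨mq, hmq, hmqle⟩ := qPoch_abs_lower q q hq (qPoch_self_ne_zero q hq)
  set MA := Real.exp (Complex.abs A * (1 - Complex.abs q)⁻¹) with hMA
  set MB := Real.exp (Complex.abs B * (1 - Complex.abs q1)⁻¹) with hMB
  have hMA0 : 0 < MA := Real.exp_pos _
  have hMB0 : 0 < MB := Real.exp_pos _
  set K := MA * MB / (mC * m1 * mq) with hKdef
  have hxa : 0 ≤ Complex.abs x := AbsoluteValue.nonneg _ _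
  have hya : 0 ≤ Complex.abs y := AbsoluteValue.nonneg _ _
  apply Summable.of_norm_bounded
    (g := fun p : ℕ × ℕ => K * (Complex.abs x ^ p.1 * Complex.abs y ^ p.2))
  · exact ((summable_geometric_of_lt_one hxa hx).mul_of_nonneg
      (summable_geometric_of_lt_one hya hy) (fun n => by positivity)
      (fun n => by positivity)).mul_left K
  · intro p
    obtain ⟨l, k⟩ := p
    simp only [Complex.norm_eq_abs, map_mul, map_div₀, map_pow]
    have hfrac : Complex.abs (qPoch q A (l + k)) * Complex.abs (qPoch q1 B l) /
        (Complex.abs (qPoch q C (l + k)) * Complex.abs (qPoch q1 q1 l) * Complex.abs (qPoch q q k)) ≤ K := by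
      rw [hKdef]
      apply div_le_div₀ (by positivity)
      · exact mul_le_mul (qPoch_abs_le q A hq _) (qPoch_abs_le q1 B hq1 _)
          (AbsoluteValue.nonneg _ _) hMA0.le
      · positivity
      · calc mC * m1 * mq ≤ Complex.abs (qPoch q C (l + k)) * m1 * mq := by
              apply mul_le_mul_of_nonneg_right (mul_le_mul_of_nonneg_right (hmCle _) hm1.le) hmq.le
          _ ≤ Complex.abs (qPoch q C (l + k)) * Complex.abs (qPoch q1 q1 l) * mq := by
              apply mul_le_mul_of_nonneg_right
                (mul_le_mul_of_nonneg_left (hm1le _) (AbsoluteValue.nonneg _ _)) hmq.le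
          _ ≤ _ := by
              apply mul_le_mul_of_nonneg_left (hmqle _)
                (mul_nonneg (AbsoluteValue.nonneg _ _) (AbsoluteValue.nonneg _ _))
    calc Complex.abs (qPoch q A (l + k)) * Complex.abs (qPoch q1 B l) /
          (Complex.abs (qPoch q C (l + k)) * Complex.abs (qPoch q1 q1 l) * Complex.abs (qPoch q q k)) *
          Complex.abs x ^ l * Complex.abs y ^ k
        ≤ K * Complex.abs x ^ l * Complex.abs y ^ k := by
          apply mul_le_mul_of_nonneg_right (mul_le_mul_of_nonneg_right hfrac (by positivity))
            (by positivity)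
      _ = K * (Complex.abs x ^ l * Complex.abs y ^ k) := by ring

lemma scalar_id (A C P Pc u : ℂ) (hPc : Pc ≠ 0) (hC0 : C ≠ 0) (h1C : (1:ℂ) - C ≠ 0)
    (hCu : (1:ℂ) - C * u ≠ 0) :
    P * (1 - A * u) / (Pc * (1 - C * u) / (1 - C))
      = (1 - A / C) * P / (Pc * (1 - C * u) / (1 - C)) + (A / C) * (1 - C) * P / Pc := by
  have hCu' : (1:ℂ) - u * C ≠ 0 := by rwa [mul_comm]
  field_simp
  ring

lemma term_id (q q1 A B C x y : ℂ) (hq : Complex.abs q < 1) (hq1 : Complex.abs q1 < 1)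
    (hC : ∀ n, qPoch q C n ≠ 0) (hC0 : C ≠ 0) (p : ℕ × ℕ) :
    (1 - A) * (qPoch q (q * A) (p.1 + p.2) * qPoch q1 B p.1 /
        (qPoch q (q * C) (p.1 + p.2) * qPoch q1 q1 p.1 * qPoch q q p.2) * x ^ p.1 * y ^ p.2)
    = (1 - A / C) * (qPoch q A (p.1 + p.2) * qPoch q1 B p.1 /
        (qPoch q (q * C) (p.1 + p.2) * qPoch q1 q1 p.1 * qPoch q q p.2) * x ^ p.1 * y ^ p.2)
      + (A / C) * (1 - C) * (qPoch q A (p.1 + p.2) * qPoch q1 B p.1 /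
        (qPoch q C (p.1 + p.2) * qPoch q1 q1 p.1 * qPoch q q p.2) * x ^ p.1 * y ^ p.2) := by
  obtain ⟨l, k⟩ := p
  set n := l + k with hn
  have h1C : (1 : ℂ) - C ≠ 0 := by
    have := hC 1
    simpa [qPoch] using this
  have hPcn : qPoch q C n ≠ 0 := hC n
  have hCqn : (1 : ℂ) - C * q ^ n ≠ 0 := by
    have := hC (n + 1)
    rw [qPoch_succ] at this
    exact right_ne_zero_of_mul this
  have hA : (1 - A) * qPoch q (q * A) n = qPoch q A n * (1 - A * q ^ n) := by
    rw [← qPoch_shift, qPoch_succ]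
  have hCrel : (1 - C) * qPoch q (q * C) n = qPoch q C n * (1 - C * q ^ n) := by
    rw [← qPoch_shift, qPoch_succ]
  have hQceq : qPoch q (q * C) n = qPoch q C n * (1 - C * q ^ n) / (1 - C) := by
    rw [eq_div_iff h1C]
    linear_combination hCrel
  have main : (1 - A) * qPoch q (q * A) n / qPoch q (q * C) n
      = (1 - A / C) * qPoch q A n / qPoch q (q * C) n
        + (A / C) * (1 - C) * qPoch q A n / qPoch q C n := by
    rw [hA, hQceq]
    exact scalar_id A C (qPoch q A n) (qPoch q C n) (q ^ n) hPcn hC0 h1C hCqn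
  linear_combination (qPoch q1 B l / (qPoch q1 q1 l * qPoch q q k) * x ^ l * y ^ k) * main

theorem stmt7 (q q1 A B C x y : ℂ)
    (hq0 : 0 < ‖q‖) (hq1 : ‖q‖ < 1)
    (hq10 : 0 < ‖q1‖) (hq11 : ‖q1‖ < 1)
    (hC : ∀ n : ℕ, qPoch q C n ≠ 0)
    (hC0 : C ≠ 0) (hx : ‖x‖ < 1) (hy : ‖y‖ < 1) :
    (1 - A) * Phi1 q q1 (q * A) B (q * C) x y =
      (1 - A / C) * Phi1 q q1 A B (q * C) x y
        + (A / C) * (1 - C) * Phi1 q q1 A B C x y := by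
  have h1C : (1 : ℂ) - C ≠ 0 := by
    have := hC 1
    simpa [qPoch] using this
  have hCq : ∀ n, qPoch q (q * C) n ≠ 0 := by
    intro n
    intro h
    have h2 : (1 - C) * qPoch q (q * C) n = qPoch q C (n + 1) := (qPoch_shift q C n).symm
    rw [h, mul_zero] at h2
    exact hC (n + 1) h2.symm
  have hs2 := phi1_summable q q1 A B (q * C) x y hq1 hq11 hCq hx hy
  have hs3 := phi1_summable q q1 A B C x y hq1 hq11 hC hx hy
  unfold Phi1
  rw [← tsum_mul_left, ← tsum_mul_left, ← tsum_mul_left,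
    ← Summable.tsum_add (hs2.mul_left (1 - A / C)) (hs3.mul_left ((A / C) * (1 - C)))]
  exact tsum_congr fun p => term_id q q1 A B C x y hq1 hq11 hC hC0 p
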